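/- Let μ be a reduced p×3 interval matrix. Then mrk(μ) ≤ 2 if and only if there exists a matrix A ∈ μ such that either the third column A^{(3)} lies in the linear span of the first two columns A^{(1)}, A^{(2)}, or the second column A^{(2)} lies in the linear span of A^{(1)}, A^{(3)}. -/

import Mathlib

open Submodule Module Matrix

lemma range_three {α : Type*} (a b c : α) :
    Set.range ![a, b, c] = ({a, b, c} : Set α) := by
  ext x
  constructor
  · rintro ⟨j, rfl⟩
    fin_cases j <;> simp
  · rintro (rfl | rfl | rfl)
    exacts [⟨0, rfl⟩, ⟨1, rfl⟩, ⟨2, rfl⟩]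

lemma range_two {α : Type*} (a b : α) :
    Set.range ![a, b] = ({a, b} : Set α) := by
  ext x
  constructor
  · rintro ⟨j, rfl⟩
    fin_cases j <;> simp
  · rintro (rfl | rfl)
    exacts [⟨0, rfl⟩, ⟨1, rfl⟩]

lemma span_key {p : ℕ} (v0 v1 v2 : Fin p → ℝ) (h0 : v0 ≠ 0)
    (hr : finrank ℝ (span ℝ ({v0, v1, v2} : Set (Fin p → ℝ))) ≤ 2) :
    v2 ∈ span ℝ ({v0, v1} : Set (Fin p → ℝ)) ∨
      v1 ∈ span ℝ ({v0, v2} : Set (Fin p → ℝ)) := by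
  by_contra h
  push_neg at h
  obtain ⟨h2, h1⟩ := h
  have h10 : v1 ∉ span ℝ ({v0} : Set (Fin p → ℝ)) := fun hm =>
    h1 (span_mono (Set.singleton_subset_iff.mpr (Set.mem_insert _ _)) hm)
  have li0 : LinearIndependent ℝ ![v0] := by
    apply linearIndependent_fin_cons.mpr
    refine ⟨linearIndependent_empty_type, ?_⟩
    simp [h0]
  have li1 : LinearIndependent ℝ ![v1, v0] := by
    apply linearIndependent_fin_cons.mpr
    refine ⟨li0, ?_⟩
    have : Set.range ![v0] = ({v0} : Set (Fin p → ℝ)) := by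
      ext x; constructor
      · rintro ⟨j, rfl⟩; fin_cases j; simp
      · rintro rfl; exact ⟨0, rfl⟩
    rw [this]; exact h10
  have li2 : LinearIndependent ℝ ![v2, v1, v0] := by
    apply linearIndependent_fin_cons.mpr
    refine ⟨li1, ?_⟩
    rw [range_two]
    have : ({v1, v0} : Set (Fin p → ℝ)) = {v0, v1} := Set.pair_comm _ _
    rw [this]; exact h2
  have hcard := finrank_span_eq_card li2
  rw [range_three] at hcard
  have hset : ({v2, v1, v0} : Set (Fin p → ℝ)) = {v0, v1, v2} := by
    ext x; simp; tauto
  rw [hset] at hcard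
  simp [hcard] at hr

/-- For a reduced p×3 interval matrix μ, mrk(μ) ≤ 2 iff there exists
A ∈ μ whose third column lies in the span of the first two columns, or whose second
column lies in the span of the first and third columns. -/
theorem mrk_le_two_iff_span (p : ℕ) (m M : Matrix (Fin p) (Fin 3) ℝ)
    (hle : ∀ i j, m i j ≤ M i j)
    (hredrow : ∀ i, ∃ j, ¬ (m i j ≤ 0 ∧ 0 ≤ M i j))
    (hredcol : ∀ j, ∃ i, ¬ (m i j ≤ 0 ∧ 0 ≤ M i j)) :
    sInf {r : ℕ | ∃ A : Matrix (Fin p) (Fin 3) ℝ,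
        (∀ i j, A i j ∈ Set.Icc (m i j) (M i j)) ∧ A.rank = r} ≤ 2 ↔
      ∃ A : Matrix (Fin p) (Fin 3) ℝ,
        (∀ i j, A i j ∈ Set.Icc (m i j) (M i j)) ∧
          ((fun i => A i 2) ∈
              Submodule.span ℝ ({fun i => A i 0, fun i => A i 1} : Set (Fin p → ℝ)) ∨
            (fun i => A i 1) ∈
              Submodule.span ℝ ({fun i => A i 0, fun i => A i 2} : Set (Fin p → ℝ))) := by
  have hcols : ∀ A : Matrix (Fin p) (Fin 3) ℝ,
      Set.range Aᵀ = ({fun i => A i 0, fun i => A i 1, fun i => A i 2} : Set (Fin p → ℝ)) := by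
    intro A
    have : Aᵀ = ![fun i => A i 0, fun i => A i 1, fun i => A i 2] := by
      ext j i; fin_cases j <;> rfl
    rw [this, range_three]
  constructor
  · intro h
    have hne : ({r : ℕ | ∃ A : Matrix (Fin p) (Fin 3) ℝ,
        (∀ i j, A i j ∈ Set.Icc (m i j) (M i j)) ∧ A.rank = r}).Nonempty :=
      ⟨m.rank, m, fun i j => ⟨le_refl _, hle i j⟩, rfl⟩
    obtain ⟨A, hA, hrank⟩ := Nat.sInf_mem hne
    refine ⟨A, hA, ?_⟩
    have hr2 : A.rank ≤ 2 := hrank.symm ▸ (hrank ▸ h)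
    rw [Matrix.rank_eq_finrank_span_cols, show Set.range A.col = Set.range Aᵀ from rfl, hcols A] at hr2
    have h0 : (fun i => A i 0) ≠ 0 := by
      obtain ⟨i, hi⟩ := hredcol 0
      intro hz
      have : A i 0 = 0 := congrFun hz i
      obtain ⟨hl, hu⟩ := hA i 0
      exact hi ⟨this ▸ hl, this ▸ hu⟩
    exact span_key _ _ _ h0 hr2
  · rintro ⟨A, hA, hcase⟩
    have hrank : A.rank ≤ 2 := by
      rw [Matrix.rank_eq_finrank_span_cols, show Set.range A.col = Set.range Aᵀ from rfl, hcols A]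
      rcases hcase with hc | hc
      · have : ({fun i => A i 0, fun i => A i 1, fun i => A i 2} : Set (Fin p → ℝ))
            = insert (fun i => A i 2) {fun i => A i 0, fun i => A i 1} := by
          ext x; simp; tauto
        rw [this, span_insert_eq_span hc, ← range_two]
        exact finrank_range_le_card _
      · have : ({fun i => A i 0, fun i => A i 1, fun i => A i 2} : Set (Fin p → ℝ))
            = insert (fun i => A i 1) {fun i => A i 0, fun i => A i 2} := by
          ext x; simp; tauto
        rw [this, span_insert_eq_span hc, ← range_two]
        exact finrank_range_le_card _
    exact le_trans (Nat.sInf_le ⟨A, hA, rfl⟩) hrank
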